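/- The root x₀ of the ML equation f(x) = 0 satisfies x₀ ≥ exp(ln(1 + P/(A·2^K))·S/P) − 1, where S := ∑_{i=L}^{K} b_i and P := ∑_{i=L}^{K} b_i·2^{K−i}. -/

import Mathlib

open Real Finset

private lemma psi_nonneg (y : ℝ) : 0 ≤ y * Real.exp y + 1 - Real.exp y := by
  have h1 : 1 - y ≤ Real.exp (-y) := by linarith [Real.add_one_le_exp (-y)]
  have h2 : Real.exp y * Real.exp (-y) = 1 := by rw [← Real.exp_add]; simp
  nlinarith [Real.exp_pos y, mul_le_mul_of_nonneg_left h1 (Real.exp_pos y).le]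

private lemma phi_hasDerivAt (z : ℝ) :
    HasDerivAt (fun y : ℝ => y * Real.exp y + y + 2 - 2 * Real.exp y)
      (z * Real.exp z + 1 - Real.exp z) z := by
  have h1 : HasDerivAt (fun y : ℝ => y * Real.exp y)
      (1 * Real.exp z + z * Real.exp z) z :=
    (hasDerivAt_id z).mul (Real.hasDerivAt_exp z)
  have h2 := (((h1.fun_add (hasDerivAt_id z)).add_const 2).fun_sub
    ((Real.hasDerivAt_exp z).const_mul 2))
  refine HasDerivAt.congr_deriv h2 ?_
  ring

private lemma phi_nonneg {y : ℝ} (hy : 0 ≤ y) :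
    0 ≤ y * Real.exp y + y + 2 - 2 * Real.exp y := by
  have mono : MonotoneOn (fun y : ℝ => y * Real.exp y + y + 2 - 2 * Real.exp y)
      (Set.Ici 0) := by
    apply monotoneOn_of_deriv_nonneg (convex_Ici 0)
    · exact fun x _ => (phi_hasDerivAt x).differentiableAt.continuousAt.continuousWithinAt
    · exact fun x _ => (phi_hasDerivAt x).differentiableAt.differentiableWithinAt
    · intro x _
      rw [(phi_hasDerivAt x).deriv]
      exact psi_nonneg x
  have h0 := mono (Set.self_mem_Ici (a := (0:ℝ))) hy hy
  simpa [Real.exp_zero] using h0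

private lemma h_convex : ConvexOn ℝ (Set.Ioi (0:ℝ)) (fun y => y / (Real.exp y - 1)) := by
  have hne : ∀ y ∈ Set.Ioi (0:ℝ), Real.exp y - 1 ≠ 0 := by
    intro y hy
    have : (1:ℝ) < Real.exp y := by
      nlinarith [Real.add_one_le_exp y, Set.mem_Ioi.mp hy]
    linarith
  have hd1 : ∀ y ∈ Set.Ioi (0:ℝ), HasDerivAt (fun y => y / (Real.exp y - 1))
      ((1 * (Real.exp y - 1) - y * Real.exp y) / (Real.exp y - 1)^2) y := by
    intro y hy
    exact (hasDerivAt_id y).div ((Real.hasDerivAt_exp y).sub_const 1) (hne y hy)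
  have hd2 : ∀ y ∈ Set.Ioi (0:ℝ),
      HasDerivAt (fun y => (1 * (Real.exp y - 1) - y * Real.exp y) / (Real.exp y - 1)^2)
        (Real.exp y * (y * Real.exp y + y + 2 - 2 * Real.exp y) / (Real.exp y - 1)^3) y := by
    intro y hy
    have hnum : HasDerivAt (fun y => 1 * (Real.exp y - 1) - y * Real.exp y)
        (1 * Real.exp y - (1 * Real.exp y + y * Real.exp y)) y :=
      (((Real.hasDerivAt_exp y).sub_const 1).const_mul 1).sub
        ((hasDerivAt_id y).mul (Real.hasDerivAt_exp y))
    have hden : HasDerivAt (fun y => (Real.exp y - 1)^2)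
        (2 * (Real.exp y - 1)^1 * Real.exp y) y := by
      simpa using ((Real.hasDerivAt_exp y).sub_const 1).fun_pow 2
    have hden2 : (Real.exp y - 1)^2 ≠ 0 := pow_ne_zero 2 (hne y hy)
    have h := hnum.fun_div hden hden2
    refine HasDerivAt.congr_deriv h ?_
    have h1 : Real.exp y - 1 ≠ 0 := hne y hy
    field_simp
    ring
  apply convexOn_of_hasDerivWithinAt2_nonneg (convex_Ioi 0)
  · apply ContinuousOn.div continuousOn_id
    · exact (Real.continuous_exp.sub continuous_const).continuousOn
    · exact hne
  · intro x hx
    rw [interior_Ioi] at hx ⊢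
    exact (hd1 x hx).hasDerivWithinAt
  · intro x hx
    rw [interior_Ioi] at hx ⊢
    exact (hd2 x hx).hasDerivWithinAt
  · intro x hx
    rw [interior_Ioi] at hx
    have h1 : (1:ℝ) < Real.exp x := by
      nlinarith [Real.add_one_le_exp x, Set.mem_Ioi.mp hx]
    apply div_nonneg
    · exact mul_nonneg (Real.exp_pos x).le (phi_nonneg (Set.mem_Ioi.mp hx).le)
    · exact pow_nonneg (by linarith) 3

theorem ml_root_lower_bound (A : ℝ) (hA : 0 < A) (L K : ℤ) (hLK : L ≤ K)
    (b : ℤ → ℝ) (hb : ∀ i, 0 ≤ b i)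
    (hne : ∃ i ∈ Finset.Icc L K, b i ≠ 0)
    (x₀ : ℝ) (hx₀ : 0 < x₀)
    (hroot : A * (2 : ℝ) ^ K * x₀ -
        ∑ j ∈ Finset.range ((K - L).toNat + 1),
          b (K - (j : ℤ)) * 2 ^ j * x₀ / ((1 + x₀) ^ (2 ^ j) - 1) = 0) :
    Real.exp (Real.log (1 + (∑ i ∈ Finset.Icc L K, b i * (2 : ℝ) ^ (K - i)) / (A * (2 : ℝ) ^ K)) *
        ((∑ i ∈ Finset.Icc L K, b i) / (∑ i ∈ Finset.Icc L K, b i * (2 : ℝ) ^ (K - i)))) - 1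
      ≤ x₀ := by
  obtain ⟨i₀, hi₀, hbi₀⟩ := hne
  set n : ℕ := (K - L).toNat with hn
  have hinj : ∀ a ∈ Finset.range (n+1), ∀ c ∈ Finset.range (n+1),
      K - (a:ℤ) = K - (c:ℤ) → a = c := by intro a _ c _ h; omega
  have himg : Finset.Icc L K = Finset.image (fun j : ℕ => K - (j:ℤ)) (Finset.range (n+1)) := by
    ext i
    simp only [Finset.mem_Icc, Finset.mem_image, Finset.mem_range]
    constructor
    · rintro ⟨h1, h2⟩
      exact ⟨(K - i).toNat, by omega, by omega⟩
    · rintro ⟨j, hj, rfl⟩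
      omega
  set S : ℝ := ∑ i ∈ Finset.Icc L K, b i with hS
  set P : ℝ := ∑ i ∈ Finset.Icc L K, b i * (2:ℝ)^(K - i) with hP
  have hSr : S = ∑ j ∈ Finset.range (n+1), b (K - (j:ℤ)) := by
    rw [hS, himg, Finset.sum_image hinj]
  have hPr : P = ∑ j ∈ Finset.range (n+1), b (K - (j:ℤ)) * (2:ℝ)^j := by
    rw [hP, himg, Finset.sum_image hinj]
    refine Finset.sum_congr rfl fun j hj => ?_
    rw [show K - (K - (j:ℤ)) = (j:ℤ) by ring, zpow_natCast]
  have hSpos : 0 < S := by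
    rw [hS]
    exact Finset.sum_pos' (fun i _ => hb i) ⟨i₀, hi₀, (hb i₀).lt_of_ne (Ne.symm hbi₀)⟩
  have hPS : S ≤ P := by
    rw [hS, hP]
    refine Finset.sum_le_sum fun i hi => ?_
    have h2 : (1:ℝ) ≤ (2:ℝ)^(K - i) := by
      rw [Finset.mem_Icc] at hi
      rw [show K - i = (((K - i).toNat : ℕ) : ℤ) by omega, zpow_natCast]
      exact one_le_pow₀ one_le_two
    nlinarith [hb i]
  have hPpos : 0 < P := lt_of_lt_of_le hSpos hPS
  have hu : (1:ℝ) < 1 + x₀ := by linarith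
  set t : ℝ := Real.log (1 + x₀) with htdef
  have ht : 0 < t := Real.log_pos hu
  have hexp : ∀ j : ℕ, Real.exp (t * 2^j) = (1 + x₀)^(2^j : ℕ) := by
    intro j
    have h2 : (2:ℝ)^j = ((2^j : ℕ) : ℝ) := by push_cast; ring
    rw [mul_comm, h2, Real.exp_nat_mul, Real.exp_log (by linarith : (0:ℝ) < 1 + x₀)]
  have hden : ∀ j : ℕ, (0:ℝ) < (1 + x₀) ^ (2 ^ j : ℕ) - 1 := by
    intro j
    have : (1:ℝ) < (1 + x₀) ^ (2 ^ j : ℕ) := one_lt_pow₀ hu (by positivity)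
    linarith
  set B : ℝ := A * (2:ℝ)^K with hB
  have hBpos : 0 < B := mul_pos hA (zpow_pos (by norm_num) K)
  have hsum : ∑ j ∈ Finset.range (n+1),
      b (K - (j:ℤ)) * 2 ^ j * x₀ / ((1 + x₀) ^ (2 ^ j) - 1) = B * x₀ := by
    linarith [hroot]
  have hJ := h_convex.map_centerMass_le (t := Finset.range (n+1))
      (w := fun j => b (K - (j:ℤ))) (p := fun j => t * 2^j)
      (fun i _ => hb _) (by rw [← hSr]; exact hSpos)
      (fun i _ => Set.mem_Ioi.mpr (by positivity))
  simp only [Finset.centerMass, smul_eq_mul, Function.comp] at hJ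
  rw [← hSr] at hJ
  have e1 : ∑ j ∈ Finset.range (n+1), b (K - (j:ℤ)) * (t * 2^j) = t * P := by
    rw [hPr, Finset.mul_sum]
    exact Finset.sum_congr rfl fun j _ => by ring
  have e2 : ∑ j ∈ Finset.range (n+1),
      b (K - (j:ℤ)) * (t * 2^j / (Real.exp (t * 2^j) - 1)) = t * B := by
    have hterm : ∀ j ∈ Finset.range (n+1),
        b (K - (j:ℤ)) * (t * 2^j / (Real.exp (t * 2^j) - 1))
          = (t/x₀) * (b (K - (j:ℤ)) * 2 ^ j * x₀ / ((1 + x₀) ^ (2 ^ j) - 1)) := by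
      intro j _
      rw [hexp j]
      have hd := (hden j).ne'
      field_simp
    rw [Finset.sum_congr rfl hterm, ← Finset.mul_sum, hsum]
    field_simp
  rw [e1, e2] at hJ
  have hz : 0 < S⁻¹ * (t * P) := by positivity
  have hM : 0 < Real.exp (S⁻¹ * (t * P)) - 1 := by
    nlinarith [Real.add_one_le_exp (S⁻¹ * (t * P))]
  -- from hJ : (S⁻¹*(t*P)) / (exp (S⁻¹*(t*P)) - 1) ≤ S⁻¹ * (t*B)
  have hstep : P ≤ B * (Real.exp (S⁻¹ * (t * P)) - 1) := by
    have h3 := (div_le_iff₀ hM).mp hJ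
    have hS' : (0:ℝ) < S⁻¹ := by positivity
    nlinarith [mul_pos ht hPpos]
  have hlog : Real.log (1 + P / B) ≤ S⁻¹ * (t * P) := by
    rw [Real.log_le_iff_le_exp (by positivity)]
    have h7 : P / B ≤ Real.exp (S⁻¹ * (t * P)) - 1 :=
      (div_le_iff₀ hBpos).mpr (by nlinarith [hstep])
    linarith
  have hfin : Real.log (1 + P / B) * (S / P) ≤ t := by
    have h4 := mul_le_mul_of_nonneg_right hlog (le_of_lt (by positivity : 0 < S / P))
    have h5 : S⁻¹ * (t * P) * (S / P) = t := by field_simp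
    linarith [h4, h5.le, h5.ge]
  have h6 : Real.exp (Real.log (1 + P / B) * (S / P)) ≤ 1 + x₀ := by
    calc Real.exp (Real.log (1 + P / B) * (S / P)) ≤ Real.exp t := Real.exp_le_exp.mpr hfin
      _ = 1 + x₀ := Real.exp_log (by linarith)
  linarith [h6]
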